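/- Let (Ω, 𝓕) be a measurable space and let c : 𝓕 → [0,1] be a monotone, normalized set function. For every bounded measurable X : Ω → ℝ taking values in ℕ, one has ∫⌊X/2⌋ dc + ∫⌊(X+1)/2⌋ dc = ∫X dc, where the floor functions are applied pointwise. -/

import Mathlib

open MeasureTheory Set

/-- The Choquet integral of `X` with respect to the set function `c`:
`∫ X dc = ∫_{-∞}^0 (c(X > x) - 1) dx + ∫_0^∞ c(X > x) dx`. -/
noncomputable def choquet {Ω : Type*} [MeasurableSpace Ω] (c : Set Ω → ℝ) (X : Ω → ℝ) : ℝ :=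
  (∫ x in Set.Iio (0 : ℝ), (c {ω | x < X ω} - 1)) + ∫ x in Set.Ioi (0 : ℝ), c {ω | x < X ω}

/-- For a bounded measurable `X` with values in `ℕ`,
`∫⌊X/2⌋ dc + ∫⌊(X+1)/2⌋ dc = ∫X dc`. -/
lemma choquet_nat {Ω : Type*} [MeasurableSpace Ω] (c : Set Ω → ℝ)
    (hc_empty : c ∅ = 0) (hc_univ : c Set.univ = 1)
    (Y : Ω → ℝ) (N : ℕ) (hY0 : ∀ ω, 0 ≤ Y ω)
    (hYN : ∀ ω, ∃ n : ℕ, Y ω = n ∧ n ≤ N) :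
    choquet c Y = ∑ n ∈ Finset.range N, c {ω | (n : ℝ) < Y ω} := by
  unfold choquet
  have h1 : (∫ x in Set.Iio (0 : ℝ), (c {ω | x < Y ω} - 1)) = 0 := by
    rw [setIntegral_congr_fun measurableSet_Iio (g := fun _ => (0:ℝ))]
    · simp
    · intro x hx
      have : {ω | x < Y ω} = Set.univ := by
        ext ω; simp only [Set.mem_setOf_eq, Set.mem_univ, iff_true]
        exact lt_of_lt_of_le hx (hY0 ω)
      simp [this, hc_univ]
  rw [h1, zero_add, ← integral_Ici_eq_integral_Ioi]
  have h3 : ∀ x ∈ Set.Ici (0:ℝ), c {ω | x < Y ω} =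
      ∑ n ∈ Finset.range N, (Set.Ico (n:ℝ) (n+1)).indicator
        (fun _ => c {ω | (n : ℝ) < Y ω}) x := by
    intro x hx
    simp only [Set.mem_Ici] at hx
    by_cases hxN : x < N
    · have hn : ⌊x⌋₊ < N := (Nat.floor_lt hx).mpr hxN
      rw [Finset.sum_eq_single ⌊x⌋₊]
      · have hmem : x ∈ Set.Ico ((⌊x⌋₊:ℝ)) (⌊x⌋₊+1) := by
          constructor
          · exact Nat.floor_le hx
          · exact_mod_cast Nat.lt_floor_add_one x
        rw [Set.indicator_of_mem hmem]
        congr 1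
        ext ω
        simp only [Set.mem_setOf_eq]
        constructor
        · intro h; exact lt_of_le_of_lt (Nat.floor_le hx) h
        · intro h
          obtain ⟨k, hk, -⟩ := hYN ω
          rw [hk] at h ⊢
          have : ⌊x⌋₊ < k := by exact_mod_cast h
          calc x < (⌊x⌋₊:ℝ) + 1 := by exact_mod_cast Nat.lt_floor_add_one x
            _ ≤ k := by exact_mod_cast this
      · intro m _ hm
        apply Set.indicator_of_notMem
        intro hmem
        obtain ⟨h1', h2'⟩ := hmem
        apply hm
        symm
        rw [Nat.floor_eq_iff hx]
        exact ⟨h1', by exact_mod_cast h2'⟩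
      · intro h; exact absurd (Finset.mem_range.mpr hn) h
    · push_neg at hxN
      have hempty : {ω | x < Y ω} = ∅ := by
        ext ω; simp only [Set.mem_setOf_eq, Set.mem_empty_iff_false, iff_false, not_lt]
        obtain ⟨k, hk, hkN⟩ := hYN ω
        rw [hk]
        calc (k:ℝ) ≤ N := by exact_mod_cast hkN
          _ ≤ x := hxN
      rw [hempty, hc_empty]
      symm
      apply Finset.sum_eq_zero
      intro n hn
      apply Set.indicator_of_notMem
      intro hmem
      have : x < (n:ℝ) + 1 := hmem.2
      have hnN : n < N := Finset.mem_range.mp hn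
      have : (n:ℝ) + 1 ≤ N := by exact_mod_cast hnN
      linarith
  rw [setIntegral_congr_fun measurableSet_Ici h3]
  have hint : ∀ n ∈ Finset.range N, IntegrableOn
      ((Set.Ico (n:ℝ) (n+1)).indicator (fun _ => c {ω | (n : ℝ) < Y ω})) (Set.Ici (0:ℝ)) := by
    intro n _
    apply Integrable.integrableOn
    rw [integrable_indicator_iff measurableSet_Ico]
    apply (integrableOn_const_iff).mpr
    right
    simp [Real.volume_Ico]
  rw [integral_finset_sum _ hint]
  apply Finset.sum_congr rfl
  intro n hn
  rw [setIntegral_indicator measurableSet_Ico]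
  have : Set.Ici (0:ℝ) ∩ Set.Ico (n:ℝ) (n+1) = Set.Ico (n:ℝ) (n+1) := by
    apply Set.inter_eq_self_of_subset_right
    intro x hx
    exact le_trans (by positivity) hx.1
  rw [this, setIntegral_const]
  simp [Real.volume_Ico]

lemma sum_even_odd (f : ℕ → ℝ) (K : ℕ) :
    ∑ n ∈ Finset.range K, f (2*n) + ∑ n ∈ Finset.range K, f (2*n+1)
      = ∑ m ∈ Finset.range (2*K), f m := by
  induction K with
  | zero => simp
  | succ k ih =>
    rw [Finset.sum_range_succ, Finset.sum_range_succ, Nat.mul_succ,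
      Finset.sum_range_succ, Finset.sum_range_succ]
    linarith

theorem choquet_floor_halves_add {Ω : Type*} [MeasurableSpace Ω] (c : Set Ω → ℝ)
    (hc_mono : ∀ ⦃A B : Set Ω⦄, MeasurableSet A → MeasurableSet B → A ⊆ B → c A ≤ c B)
    (hc_range : ∀ A : Set Ω, MeasurableSet A → c A ∈ Set.Icc (0 : ℝ) 1)
    (hc_empty : c ∅ = 0) (hc_univ : c Set.univ = 1)
    (X : Ω → ℝ) (hX : Measurable X) (hXb : ∃ M, ∀ ω, |X ω| ≤ M)
    (hXnat : ∀ ω, ∃ n : ℕ, X ω = n) :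
    choquet c (fun ω => (⌊X ω / 2⌋ : ℝ)) + choquet c (fun ω => (⌊(X ω + 1) / 2⌋ : ℝ)) =
      choquet c X := by
  obtain ⟨M, hM⟩ := hXb
  set K : ℕ := ⌈M⌉₊ + 1 with hK
  have hX2K : ∀ ω, X ω ≤ (2*K : ℕ) := by
    intro ω
    have h1 : X ω ≤ M := le_trans (le_abs_self _) (hM ω)
    have h2 : M ≤ (⌈M⌉₊ : ℝ) := Nat.le_ceil M
    have h3 : (⌈M⌉₊ : ℝ) ≤ ((2*K : ℕ) : ℝ) := by
      have : ⌈M⌉₊ ≤ 2*K := by omega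
      exact_mod_cast this
    linarith
  have hX0 : ∀ ω, 0 ≤ X ω := fun ω => by
    obtain ⟨n, hn⟩ := hXnat ω; rw [hn]; positivity
  -- the three choquet integrals as sums
  have e0 : choquet c X = ∑ m ∈ Finset.range (2*K), c {ω | (m : ℝ) < X ω} := by
    apply choquet_nat c hc_empty hc_univ X (2*K) hX0
    intro ω
    obtain ⟨n, hn⟩ := hXnat ω
    refine ⟨n, hn, ?_⟩
    have := hX2K ω
    rw [hn] at this
    exact_mod_cast this
  have e1 : choquet c (fun ω => (⌊X ω / 2⌋ : ℝ))
      = ∑ n ∈ Finset.range K, c {ω | (n : ℝ) < (⌊X ω / 2⌋ : ℝ)} := by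
    apply choquet_nat c hc_empty hc_univ _ K
    · intro ω
      have : (0:ℤ) ≤ ⌊X ω / 2⌋ := Int.floor_nonneg.mpr (by have := hX0 ω; linarith)
      exact_mod_cast this
    · intro ω
      have h0 : (0:ℤ) ≤ ⌊X ω / 2⌋ := Int.floor_nonneg.mpr (by have := hX0 ω; linarith)
      refine ⟨⌊X ω / 2⌋.toNat, by exact_mod_cast (Int.toNat_of_nonneg h0).symm, ?_⟩
      have hle : ⌊X ω / 2⌋ ≤ (K : ℤ) := by
        have h2 : X ω / 2 ≤ (K : ℝ) := by
          have := hX2K ω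
          push_cast at this ⊢
          linarith
        calc ⌊X ω / 2⌋ ≤ ⌊(K:ℝ)⌋ := Int.floor_le_floor h2
          _ = (K:ℤ) := by exact_mod_cast Int.floor_intCast (K:ℤ)
      omega
  have e2 : choquet c (fun ω => (⌊(X ω + 1) / 2⌋ : ℝ))
      = ∑ n ∈ Finset.range K, c {ω | (n : ℝ) < (⌊(X ω + 1) / 2⌋ : ℝ)} := by
    apply choquet_nat c hc_empty hc_univ _ K
    · intro ω
      have : (0:ℤ) ≤ ⌊(X ω + 1) / 2⌋ := Int.floor_nonneg.mpr (by have := hX0 ω; linarith)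
      exact_mod_cast this
    · intro ω
      have h0 : (0:ℤ) ≤ ⌊(X ω + 1) / 2⌋ := Int.floor_nonneg.mpr (by have := hX0 ω; linarith)
      refine ⟨⌊(X ω + 1) / 2⌋.toNat, by exact_mod_cast (Int.toNat_of_nonneg h0).symm, ?_⟩
      have hle : ⌊(X ω + 1) / 2⌋ < (K : ℤ) + 1 := by
        apply Int.floor_lt.mpr
        have := hX2K ω
        push_cast at this ⊢
        linarith
      omega
  -- rewrite the sets
  have s1 : ∀ n : ℕ, {ω | (n : ℝ) < (⌊X ω / 2⌋ : ℝ)} = {ω | ((2*n+1 : ℕ) : ℝ) < X ω} := by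
    intro n
    ext ω
    obtain ⟨k, hk⟩ := hXnat ω
    simp only [Set.mem_setOf_eq, hk]
    constructor
    · intro h
      have h1 : (n:ℤ) < ⌊(k:ℝ) / 2⌋ := by exact_mod_cast h
      have h2 : ((n:ℤ)+1 : ℝ) ≤ (k:ℝ) / 2 := by have := Int.le_floor.mp (Int.lt_iff_add_one_le.mp h1); push_cast at this ⊢; linarith
      have h3 : (2*n+2 : ℕ) ≤ k := by
        have : ((2*n+2 : ℕ) : ℝ) ≤ (k:ℝ) := by push_cast at h2 ⊢; linarith
        exact_mod_cast this
      exact_mod_cast (by omega : 2*n+1 < k)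
    · intro h
      have hnk : 2*n+1 < k := by exact_mod_cast h
      have h2 : ((n:ℤ)+1) ≤ ⌊(k:ℝ)/2⌋ := by
        apply Int.le_floor.mpr
        have : ((2*n+2 : ℕ) : ℝ) ≤ (k:ℝ) := by exact_mod_cast (by omega : 2*n+2 ≤ k)
        push_cast at this ⊢
        linarith
      have : (n:ℤ) < ⌊(k:ℝ)/2⌋ := by omega
      exact_mod_cast this
  have s2 : ∀ n : ℕ, {ω | (n : ℝ) < (⌊(X ω + 1) / 2⌋ : ℝ)} = {ω | ((2*n : ℕ) : ℝ) < X ω} := by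
    intro n
    ext ω
    obtain ⟨k, hk⟩ := hXnat ω
    simp only [Set.mem_setOf_eq, hk]
    constructor
    · intro h
      have h1 : (n:ℤ) < ⌊((k:ℝ)+1) / 2⌋ := by exact_mod_cast h
      have h2 : ((n:ℤ)+1 : ℝ) ≤ ((k:ℝ)+1) / 2 := by have := Int.le_floor.mp (Int.lt_iff_add_one_le.mp h1); push_cast at this ⊢; linarith
      have h3 : (2*n+1 : ℕ) ≤ k := by
        have : ((2*n+1 : ℕ) : ℝ) ≤ (k:ℝ) := by push_cast at h2 ⊢; linarith
        exact_mod_cast this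
      exact_mod_cast (by omega : 2*n < k)
    · intro h
      have hnk : 2*n < k := by exact_mod_cast h
      have h2 : ((n:ℤ)+1) ≤ ⌊((k:ℝ)+1)/2⌋ := by
        apply Int.le_floor.mpr
        have : ((2*n+1 : ℕ) : ℝ) ≤ (k:ℝ) := by exact_mod_cast (by omega : 2*n+1 ≤ k)
        push_cast at this ⊢
        linarith
      have : (n:ℤ) < ⌊((k:ℝ)+1)/2⌋ := by omega
      exact_mod_cast this
  rw [e0, e1, e2]
  have r1 : ∑ n ∈ Finset.range K, c {ω | (n : ℝ) < (⌊X ω / 2⌋ : ℝ)}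
      = ∑ n ∈ Finset.range K, c {ω | ((2*n+1 : ℕ) : ℝ) < X ω} :=
    Finset.sum_congr rfl fun n _ => by rw [s1 n]
  have r2 : ∑ n ∈ Finset.range K, c {ω | (n : ℝ) < (⌊(X ω + 1) / 2⌋ : ℝ)}
      = ∑ n ∈ Finset.range K, c {ω | ((2*n : ℕ) : ℝ) < X ω} :=
    Finset.sum_congr rfl fun n _ => by rw [s2 n]
  rw [r1, r2, add_comm]
  exact sum_even_odd (fun m => c {ω | (m : ℝ) < X ω}) K
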